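/- Fix a cell index l and an active user k ∈ A_l, and let all square-root powers ρ_{i,t}, ρ̂_{i,t} be nonnegative. Set u* = u^opt_{l,k}(ρ̂,ρ) and e* = e_{l,k}(u*, ρ̂, ρ). Then e* > 0, and the function w ↦ w·e* − ln w on (0,∞) attains its unique global minimum at w = 1/e* = 1 + SINR_{l,k}(ρ̂,ρ), with minimum value 1 − ln(1 + SINR_{l,k}(ρ̂,ρ)). -/

import Mathlib

open Finset Filter

noncomputable section

/-- `Pset A k` : the set of cells in which user index `k` is active,
i.e. `P_k = {i : k ∈ A_i}`. -/
def Pset {L K : ℕ} (A : Fin L → Finset (Fin K)) (k : Fin K) : Finset (Fin L) :=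
  Finset.univ.filter fun i => k ∈ A i

/-- The SINR denominator `D_{l,k}` for pilot powers `phat` and data powers `p`. -/
def Dterm {L K : ℕ} (M : ℕ) (σ2 : ℝ) (A : Fin L → Finset (Fin K))
    (β : Fin L → Fin K → Fin L → ℝ) (phat p : Fin L → Fin K → ℝ)
    (l : Fin L) (k : Fin K) : ℝ :=
  (M : ℝ) * (K : ℝ) * ∑ i ∈ (Pset A k).erase l, p i k * phat i k * β i k l ^ 2 +
    ((K : ℝ) * ∑ i ∈ Pset A k, phat i k * β i k l + σ2) *
      ((∑ i, ∑ t ∈ A i, p i t * β i t l) + σ2)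

/-- `SINR_{l,k}` for pilot powers `phat` and data powers `p`. -/
def SINR {L K : ℕ} (M : ℕ) (σ2 : ℝ) (A : Fin L → Finset (Fin K))
    (β : Fin L → Fin K → Fin L → ℝ) (phat p : Fin L → Fin K → ℝ)
    (l : Fin L) (k : Fin K) : ℝ :=
  (M : ℝ) * (K : ℝ) * p l k * phat l k * β l k l ^ 2 / Dterm M σ2 A β phat p l k

/-- `SINR_{l,k}(ρ̂, ρ)` : the SINR evaluated at squared square-root powers. -/
def SINRsq {L K : ℕ} (M : ℕ) (σ2 : ℝ) (A : Fin L → Finset (Fin K))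
    (β : Fin L → Fin K → Fin L → ℝ) (rhat rho : Fin L → Fin K → ℝ)
    (l : Fin L) (k : Fin K) : ℝ :=
  SINR M σ2 A β (fun i t => rhat i t ^ 2) (fun i t => rho i t ^ 2) l k

/-- The mean square error `e_{l,k}(u, ρ̂, ρ)`. -/
def eMSE {L K : ℕ} (M : ℕ) (σ2 : ℝ) (A : Fin L → Finset (Fin K))
    (β : Fin L → Fin K → Fin L → ℝ) (u : ℝ) (rhat rho : Fin L → Fin K → ℝ)
    (l : Fin L) (k : Fin K) : ℝ :=
  (M : ℝ) * (K : ℝ) * u ^ 2 * ∑ i ∈ Pset A k, rho i k ^ 2 * rhat i k ^ 2 * β i k l ^ 2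
    - 2 * Real.sqrt ((M : ℝ) * (K : ℝ)) * rho l k * rhat l k * u * β l k l
    + u ^ 2 * ((K : ℝ) * ∑ i ∈ Pset A k, rhat i k ^ 2 * β i k l + σ2) *
        ((∑ i, ∑ t ∈ A i, rho i t ^ 2 * β i t l) + σ2)
    + 1

/-- The leading (quadratic in `u`) coefficient `A_{l,k}(ρ̂, ρ)` of `e_{l,k}`. -/
def Acoef {L K : ℕ} (M : ℕ) (σ2 : ℝ) (A : Fin L → Finset (Fin K))
    (β : Fin L → Fin K → Fin L → ℝ) (rhat rho : Fin L → Fin K → ℝ)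
    (l : Fin L) (k : Fin K) : ℝ :=
  (M : ℝ) * (K : ℝ) * ∑ i ∈ Pset A k, rho i k ^ 2 * rhat i k ^ 2 * β i k l ^ 2 +
    ((K : ℝ) * ∑ i ∈ Pset A k, rhat i k ^ 2 * β i k l + σ2) *
      ((∑ i, ∑ t ∈ A i, rho i t ^ 2 * β i t l) + σ2)

/-- The optimal beamforming coefficient `u^opt_{l,k}(ρ̂, ρ)`. -/
def uopt {L K : ℕ} (M : ℕ) (σ2 : ℝ) (A : Fin L → Finset (Fin K))
    (β : Fin L → Fin K → Fin L → ℝ) (rhat rho : Fin L → Fin K → ℝ)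
    (l : Fin L) (k : Fin K) : ℝ :=
  Real.sqrt ((M : ℝ) * (K : ℝ)) * rho l k * rhat l k * β l k l /
    Acoef M σ2 A β rhat rho l k

/-- The weighted-MMSE objective `F(u, w, ρ̂, ρ)`. -/
def Fobj {L K : ℕ} (M : ℕ) (σ2 : ℝ) (A : Fin L → Finset (Fin K))
    (β : Fin L → Fin K → Fin L → ℝ) (u w rhat rho : Fin L → Fin K → ℝ) : ℝ :=
  ∑ l, ∑ k ∈ A l, (w l k * eMSE M σ2 A β (u l k) rhat rho l k - Real.log (w l k))

/-- The pilot-power quadratic coefficient `η̂_{l,k}(u, w, ρ)`. -/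
def etaHat {L K : ℕ} (M : ℕ) (σ2 : ℝ) (A : Fin L → Finset (Fin K))
    (β : Fin L → Fin K → Fin L → ℝ) (u w rho : Fin L → Fin K → ℝ)
    (l : Fin L) (k : Fin K) : ℝ :=
  rho l k ^ 2 * (M : ℝ) * (K : ℝ) * ∑ i ∈ Pset A k, w i k * u i k ^ 2 * β l k i ^ 2 +
    (K : ℝ) * ∑ j ∈ Pset A k, w j k * u j k ^ 2 * β l k j *
      ((∑ i, ∑ t ∈ A i, rho i t ^ 2 * β i t j) + σ2)

/-- The data-power quadratic coefficient `η_{l,k}(u, w, ρ̂)`. -/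
def etaData {L K : ℕ} (M : ℕ) (σ2 : ℝ) (A : Fin L → Finset (Fin K))
    (β : Fin L → Fin K → Fin L → ℝ) (u w rhat : Fin L → Fin K → ℝ)
    (l : Fin L) (k : Fin K) : ℝ :=
  rhat l k ^ 2 * (M : ℝ) * (K : ℝ) * ∑ i ∈ Pset A k, w i k * u i k ^ 2 * β l k i ^ 2 +
    ∑ i, ∑ t ∈ A i, w i t * u i t ^ 2 * β l k i *
      ((K : ℝ) * ∑ j ∈ Pset A t, rhat j t ^ 2 * β j t i + σ2)

/-- With `u* = u^opt_{l,k}(ρ̂,ρ)` and `e* = e_{l,k}(u*, ρ̂, ρ)`, we have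
`e* > 0`, and `w ↦ w e* − ln w` on `(0,∞)` attains its unique global minimum at
`w = 1/e* = 1 + SINR_{l,k}(ρ̂,ρ)`, with minimum value `1 − ln(1 + SINR_{l,k}(ρ̂,ρ))`. -/
lemma aux (cv Av Dv : ℝ) (hA : Av ≠ 0) (h : Av = Dv + cv ^ 2) :
    (cv / Av) ^ 2 * Av - 2 * cv * (cv / Av) + 1 = Dv / Av := by
  field_simp
  linear_combination h

theorem stmt3 {L K : ℕ} (M : ℕ) (hL : 0 < L) (hK : 0 < K) (hM : 0 < M)
    (σ2 : ℝ) (hσ : 0 < σ2)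
    (A : Fin L → Finset (Fin K))
    (β : Fin L → Fin K → Fin L → ℝ) (hβ : ∀ i t l, 0 ≤ β i t l)
    (rhat rho : Fin L → Fin K → ℝ)
    (hrhat : ∀ i t, 0 ≤ rhat i t) (hrho : ∀ i t, 0 ≤ rho i t)
    (l : Fin L) (k : Fin K) (hk : k ∈ A l) :
    let estar := eMSE M σ2 A β (uopt M σ2 A β rhat rho l k) rhat rho l k
    0 < estar ∧
    1 / estar = 1 + SINRsq M σ2 A β rhat rho l k ∧
    (∀ w : ℝ, 0 < w → w ≠ 1 / estar →
      (1 / estar) * estar - Real.log (1 / estar) < w * estar - Real.log w) ∧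
    (1 / estar) * estar - Real.log (1 / estar) =
      1 - Real.log (1 + SINRsq M σ2 A β rhat rho l k) := by
  intro estar
  have hlP : l ∈ Pset A k := by simp [Pset, hk]
  set D := Dterm M σ2 A β (fun i t => rhat i t ^ 2) (fun i t => rho i t ^ 2) l k with hD
  set A0 := Acoef M σ2 A β rhat rho l k with hA0
  set c := Real.sqrt ((M : ℝ) * (K : ℝ)) * rho l k * rhat l k * β l k l with hc
  have hMK : (0:ℝ) ≤ (M : ℝ) * (K : ℝ) := by positivity
  have hc2 : c ^ 2 = (M : ℝ) * (K : ℝ) * (rho l k ^ 2 * rhat l k ^ 2 * β l k l ^ 2) := by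
    rw [hc, mul_pow, mul_pow, mul_pow, Real.sq_sqrt hMK]; ring
  have hS1 : 0 ≤ ∑ i ∈ Pset A k, rhat i k ^ 2 * β i k l :=
    Finset.sum_nonneg fun i _ => mul_nonneg (sq_nonneg _) (hβ _ _ _)
  have hS2 : 0 ≤ ∑ i, ∑ t ∈ A i, rho i t ^ 2 * β i t l :=
    Finset.sum_nonneg fun i _ => Finset.sum_nonneg fun t _ =>
      mul_nonneg (sq_nonneg _) (hβ _ _ _)
  have hB : 0 < ((K : ℝ) * ∑ i ∈ Pset A k, rhat i k ^ 2 * β i k l + σ2) *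
      ((∑ i, ∑ t ∈ A i, rho i t ^ 2 * β i t l) + σ2) := by
    apply mul_pos
    · have : (0:ℝ) ≤ (K : ℝ) * ∑ i ∈ Pset A k, rhat i k ^ 2 * β i k l :=
        mul_nonneg (by positivity) hS1
      linarith
    · linarith
  have hDpos : 0 < D := by
    rw [hD, Dterm]
    have h1 : 0 ≤ (M : ℝ) * (K : ℝ) *
        ∑ i ∈ (Pset A k).erase l, rho i k ^ 2 * rhat i k ^ 2 * β i k l ^ 2 :=
      mul_nonneg hMK (Finset.sum_nonneg fun i _ => by positivity)
    linarith [hB]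
  have hsum : rho l k ^ 2 * rhat l k ^ 2 * β l k l ^ 2 +
      ∑ i ∈ (Pset A k).erase l, rho i k ^ 2 * rhat i k ^ 2 * β i k l ^ 2 =
      ∑ i ∈ Pset A k, rho i k ^ 2 * rhat i k ^ 2 * β i k l ^ 2 :=
    Finset.add_sum_erase _ (fun i => rho i k ^ 2 * rhat i k ^ 2 * β i k l ^ 2) hlP
  have hA0D : A0 = D + c ^ 2 := by
    rw [hA0, hD, hc2, Acoef, Dterm]
    linear_combination ((M : ℝ) * (K : ℝ)) * hsum.symm
  have hA0pos : 0 < A0 := by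
    rw [hA0D]; positivity
  have hes : estar = D / A0 := by
    show eMSE M σ2 A β (uopt M σ2 A β rhat rho l k) rhat rho l k = D / A0
    have huopt : uopt M σ2 A β rhat rho l k = c / A0 := by
      rw [uopt, hc, hA0]
    rw [huopt, eMSE]
    have : (M : ℝ) * (K : ℝ) * (c / A0) ^ 2 *
          ∑ i ∈ Pset A k, rho i k ^ 2 * rhat i k ^ 2 * β i k l ^ 2
        - 2 * Real.sqrt ((M : ℝ) * (K : ℝ)) * rho l k * rhat l k * (c / A0) * β l k l
        + (c / A0) ^ 2 * ((K : ℝ) * ∑ i ∈ Pset A k, rhat i k ^ 2 * β i k l + σ2) *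
          ((∑ i, ∑ t ∈ A i, rho i t ^ 2 * β i t l) + σ2) + 1
        = (c / A0) ^ 2 * A0 - 2 * c * (c / A0) + 1 := by
      rw [hA0, Acoef, hc]; ring
    rw [this]
    exact aux c A0 D hA0pos.ne' hA0D
  have hepos : 0 < estar := by rw [hes]; exact div_pos hDpos hA0pos
  have hSINR : SINRsq M σ2 A β rhat rho l k = c ^ 2 / D := by
    rw [SINRsq, SINR, ← hD, hc2]
    ring
  have h2 : 1 / estar = 1 + SINRsq M σ2 A β rhat rho l k := by
    rw [hes, hSINR, one_div_div]
    field_simp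
    linarith [hA0D]
  refine ⟨hepos, h2, ?_, ?_⟩
  · intro w hw hne
    have hwe : 0 < w * estar := mul_pos hw hepos
    have hne1 : w * estar ≠ 1 := fun h => hne (eq_div_of_mul_eq hepos.ne' h)
    have hlog := Real.log_lt_sub_one_of_pos hwe hne1
    rw [Real.log_mul hw.ne' hepos.ne'] at hlog
    rw [one_div_mul_cancel hepos.ne', Real.log_div one_ne_zero hepos.ne', Real.log_one]
    linarith
  · rw [one_div_mul_cancel hepos.ne', h2]
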